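/- Let Y : [t,T] → ℝ^{N×N} be a bounded solution of the matrix equation Y(s) = U_T + ∫_s^T ( H^{xx}(r) + A(r)Y(r) + Y(r)A(r) + Y(r)H^{pp}(r)Y(r) ) dr, where U_T, H^{xx}(r), A(r), H^{pp}(r) are symmetric, U_T ≥ 0, H^{xx}(r) ≥ 0, H^{pp}(r) ≤ 0, Y(r) ≥ 0, and there is a constant c with αᵀU_Tα + ∫_t^T αᵀH^{xx}(r)α dr ≤ c/N and ‖A(r)‖ ≤ c for all unit vectors α and r ∈ [t,T]. Then sup_{s∈[t,T]} sup_{|α|=1} αᵀY(s)α ≤ (c/N)·e^{2c(T−t)}. -/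

import Mathlib

open scoped BigOperators Matrix

lemma dot_symm' {n : ℕ} {Y : Matrix (Fin n) (Fin n) ℝ} (hs : Y.IsSymm) (u v : Fin n → ℝ) :
    u ⬝ᵥ Y.mulVec v = v ⬝ᵥ Y.mulVec u := by
  rw [Matrix.dotProduct_mulVec, ← Matrix.mulVec_transpose, hs.eq, dotProduct_comm]

lemma psd_CS' {n : ℕ} {Y : Matrix (Fin n) (Fin n) ℝ} (hY : Y.PosSemidef) (u v : Fin n → ℝ) :
    (u ⬝ᵥ Y.mulVec v)^2 ≤ (u ⬝ᵥ Y.mulVec u) * (v ⬝ᵥ Y.mulVec v) := by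
  have hs : Y.IsSymm := by
    have := hY.1
    rwa [Matrix.IsHermitian, Matrix.conjTranspose_eq_transpose_of_trivial] at this
  have h : ∀ x : ℝ, 0 ≤ (v ⬝ᵥ Y.mulVec v) * (x*x) + (2*(u ⬝ᵥ Y.mulVec v)) * x + (u ⬝ᵥ Y.mulVec u) := by
    intro x
    have h0 := hY.dotProduct_mulVec_nonneg (u + x • v)
    rw [star_trivial] at h0
    have e1 : (u + x • v) ⬝ᵥ Y.mulVec (u + x • v)
        = (v ⬝ᵥ Y.mulVec v) * (x*x) + (2*(u ⬝ᵥ Y.mulVec v)) * x + (u ⬝ᵥ Y.mulVec u) := by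
      rw [Matrix.mulVec_add, Matrix.mulVec_smul, dotProduct_add, add_dotProduct,
        add_dotProduct, dotProduct_smul, smul_dotProduct,
        smul_dotProduct, dot_symm' hs v u]
      simp [smul_eq_mul]; ring
    rw [e1] at h0; exact h0
  have hd := discrim_le_zero h
  rw [discrim] at hd
  nlinarith [hd]

theorem stmt12 (N : ℕ) (hN : 0 < N) (t T : ℝ) (htT : t ≤ T) (c : ℝ) (hc : 0 ≤ c)
    (Y A Hxx Hpp : ℝ → Matrix (Fin N) (Fin N) ℝ)
    (UT : Matrix (Fin N) (Fin N) ℝ)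
    (hYcont : ∀ i j, ContinuousOn (fun s => Y s i j) (Set.Icc t T))
    (hcont : ∀ i j, ContinuousOn (fun s => A s i j) (Set.Icc t T) ∧
      ContinuousOn (fun s => Hxx s i j) (Set.Icc t T) ∧
      ContinuousOn (fun s => Hpp s i j) (Set.Icc t T))
    (hbdd : ∃ M : ℝ, ∀ s ∈ Set.Icc t T, ∀ i j, |Y s i j| ≤ M)
    (hsym : ∀ s ∈ Set.Icc t T,
      (Y s).IsSymm ∧ (A s).IsSymm ∧ (Hxx s).IsSymm ∧ (Hpp s).IsSymm)
    (hUTsym : UT.IsSymm)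
    (hUT : UT.PosSemidef)
    (hHxx : ∀ s ∈ Set.Icc t T, (Hxx s).PosSemidef)
    (hHpp : ∀ s ∈ Set.Icc t T, (-(Hpp s)).PosSemidef)
    (hY : ∀ s ∈ Set.Icc t T, (Y s).PosSemidef)
    (hsmall : ∀ α : Fin N → ℝ, (∑ i, α i ^ 2) = 1 →
      α ⬝ᵥ UT.mulVec α + ∫ r in t..T, α ⬝ᵥ (Hxx r).mulVec α ≤ c / N)
    (hAnorm : ∀ r ∈ Set.Icc t T, ∀ α : Fin N → ℝ,
      Real.sqrt (∑ i, ((A r).mulVec α i) ^ 2) ≤ c * Real.sqrt (∑ i, α i ^ 2))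
    (heq : ∀ s ∈ Set.Icc t T, ∀ i j,
      Y s i j = UT i j +
        ∫ r in s..T, (Hxx r + A r * Y r + Y r * A r + Y r * Hpp r * Y r) i j) :
    ∀ s ∈ Set.Icc t T, ∀ α : Fin N → ℝ, (∑ i, α i ^ 2) = 1 →
      α ⬝ᵥ (Y s).mulVec α ≤ (c / N) * Real.exp (2 * c * (T - t)) := by
  obtain ⟨M₀, hM₀⟩ := hbdd
  set G : ℝ → Matrix (Fin N) (Fin N) ℝ :=
    fun r => Hxx r + A r * Y r + Y r * A r + Y r * Hpp r * Y r with hGdef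
  set Sset : ℝ → Set ℝ :=
    fun r => (fun β : Fin N → ℝ => β ⬝ᵥ (Y r).mulVec β) '' {β | (∑ i, β i ^ 2) = 1} with hSdef
  set g : ℝ → ℝ := fun r => sSup (Sset r) with hgdef
  -- the special unit vector
  set i0 : Fin N := ⟨0, hN⟩
  set β₀ : Fin N → ℝ := Pi.single i0 1 with hβ₀def
  have hβ₀ : (∑ i, β₀ i ^ 2) = 1 := by
    simp [hβ₀def, Pi.single_apply, sq]
  have hM₀0 : 0 ≤ M₀ := le_trans (abs_nonneg _) (hM₀ t ⟨le_refl t, htT⟩ i0 i0)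
  -- upper bound on Rayleigh quotients
  have hub : ∀ r ∈ Set.Icc t T, ∀ x ∈ Sset r, x ≤ N * M₀ := by
    rintro r hr x ⟨β, hβ, rfl⟩
    have h1 : β ⬝ᵥ (Y r).mulVec β ≤ ∑ i, ∑ j, |β i| * M₀ * |β j| := by
      simp only [dotProduct, Matrix.mulVec]
      refine Finset.sum_le_sum fun i _ => ?_
      calc β i * ∑ j, Y r i j * β j ≤ |β i * ∑ j, Y r i j * β j| := le_abs_self _
        _ ≤ ∑ j, |β i| * M₀ * |β j| := by
            rw [abs_mul]
            refine le_trans (mul_le_mul_of_nonneg_left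
              (Finset.abs_sum_le_sum_abs _ _) (abs_nonneg _)) ?_
            rw [Finset.mul_sum]
            refine Finset.sum_le_sum fun j _ => ?_
            rw [abs_mul]
            have := hM₀ r hr i j
            calc |β i| * (|Y r i j| * |β j|) ≤ |β i| * (M₀ * |β j|) := by
                  refine mul_le_mul_of_nonneg_left ?_ (abs_nonneg _)
                  exact mul_le_mul_of_nonneg_right this (abs_nonneg _)
              _ = |β i| * M₀ * |β j| := by ring
    have h2 : (∑ i, ∑ j, |β i| * M₀ * |β j|) = M₀ * (∑ i, |β i|)^2 := by
      rw [sq, Finset.sum_mul_sum]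
      rw [Finset.mul_sum]
      refine Finset.sum_congr rfl fun i _ => ?_
      rw [Finset.mul_sum]
      refine Finset.sum_congr rfl fun j _ => ?_
      ring
    have h3 : (∑ i, |β i|)^2 ≤ (N : ℝ) := by
      have := sq_sum_le_card_mul_sum_sq (s := (Finset.univ : Finset (Fin N)))
        (f := fun i => |β i|)
      simp only [Finset.card_univ, Fintype.card_fin, sq_abs] at this
      calc (∑ i, |β i|)^2 ≤ (N : ℝ) * ∑ i, β i ^ 2 := this
        _ = N := by rw [hβ, mul_one]
    calc β ⬝ᵥ (Y r).mulVec β ≤ M₀ * (∑ i, |β i|)^2 := h1.trans_eq h2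
      _ ≤ M₀ * N := by exact mul_le_mul_of_nonneg_left h3 hM₀0
      _ = N * M₀ := by ring
  have hSne : ∀ r, (Sset r).Nonempty := fun r => ⟨_, ⟨β₀, hβ₀, rfl⟩⟩
  have hSbdd : ∀ r ∈ Set.Icc t T, BddAbove (Sset r) :=
    fun r hr => ⟨N * M₀, fun x hx => hub r hr x hx⟩
  have hQle : ∀ r ∈ Set.Icc t T, ∀ β : Fin N → ℝ, (∑ i, β i ^ 2) = 1 →
      β ⬝ᵥ (Y r).mulVec β ≤ g r :=
    fun r hr β hβ => le_csSup (hSbdd r hr) ⟨β, hβ, rfl⟩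
  have hg0 : ∀ r ∈ Set.Icc t T, 0 ≤ g r := by
    intro r hr
    refine le_trans ?_ (hQle r hr β₀ hβ₀)
    have := (hY r hr).dotProduct_mulVec_nonneg β₀
    rwa [star_trivial] at this
  have hgM : ∀ r ∈ Set.Icc t T, g r ≤ N * M₀ :=
    fun r hr => csSup_le (hSne r) (hub r hr)
  set M : ℝ := max (c / N) (N * M₀) with hMdef
  have hM0 : 0 ≤ M := le_trans (mul_nonneg (Nat.cast_nonneg N) hM₀0) (le_max_right _ _)
  have hgM' : ∀ r ∈ Set.Icc t T, g r ≤ M :=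
    fun r hr => (hgM r hr).trans (le_max_right _ _)
  -- quadratic scaling
  have hQscale : ∀ r ∈ Set.Icc t T, ∀ β : Fin N → ℝ,
      β ⬝ᵥ (Y r).mulVec β ≤ g r * (∑ i, β i ^ 2) := by
    intro r hr β
    rcases eq_or_ne (∑ i, β i ^ 2) 0 with h0 | h0
    · have hβ0 : β = 0 := by
        funext i
        have := (Finset.sum_eq_zero_iff_of_nonneg
          (fun j _ => sq_nonneg (β j))).mp h0 i (Finset.mem_univ i)
        exact pow_eq_zero_iff (two_ne_zero) |>.mp this
      simp [hβ0, h0]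
    · have hpos : 0 < ∑ i, β i ^ 2 :=
        lt_of_le_of_ne (Finset.sum_nonneg fun i _ => sq_nonneg _) (Ne.symm h0)
      set a : ℝ := Real.sqrt (∑ i, β i ^ 2) with hadef
      have ha : 0 < a := Real.sqrt_pos.mpr hpos
      have ha2 : a ^ 2 = ∑ i, β i ^ 2 := Real.sq_sqrt hpos.le
      set β' : Fin N → ℝ := a⁻¹ • β with hβ'def
      have hβ' : (∑ i, β' i ^ 2) = 1 := by
        simp only [hβ'def, Pi.smul_apply, smul_eq_mul, mul_pow]
        rw [← Finset.mul_sum, ← ha2]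
        field_simp
      have hle := hQle r hr β' hβ'
      have hexp : β' ⬝ᵥ (Y r).mulVec β' = (a⁻¹)^2 * (β ⬝ᵥ (Y r).mulVec β) := by
        rw [hβ'def, Matrix.mulVec_smul, dotProduct_smul, smul_dotProduct]
        simp [smul_eq_mul, sq]; ring
      rw [hexp] at hle
      have : β ⬝ᵥ (Y r).mulVec β = a^2 * ((a⁻¹)^2 * (β ⬝ᵥ (Y r).mulVec β)) := by
        field_simp
      rw [this, ← ha2]
      calc a^2 * ((a⁻¹)^2 * (β ⬝ᵥ (Y r).mulVec β)) ≤ a^2 * g r := by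
            exact mul_le_mul_of_nonneg_left hle (sq_nonneg a)
        _ = g r * a^2 := by ring
  -- continuity
  have hAc : ∀ i j, ContinuousOn (fun r => A r i j) (Set.Icc t T) := fun i j => (hcont i j).1
  have hHxxc : ∀ i j, ContinuousOn (fun r => Hxx r i j) (Set.Icc t T) := fun i j => (hcont i j).2.1
  have hHppc : ∀ i j, ContinuousOn (fun r => Hpp r i j) (Set.Icc t T) := fun i j => (hcont i j).2.2
  have hGcont : ∀ i j, ContinuousOn (fun r => G r i j) (Set.Icc t T) := by
    intro i j
    simp only [hGdef, Matrix.add_apply, Matrix.mul_apply]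
    refine (((hHxxc i j).add ?_).add ?_).add ?_
    · exact continuousOn_finset_sum _ fun k _ => (hAc i k).mul (hYcont k j)
    · exact continuousOn_finset_sum _ fun k _ => (hYcont i k).mul (hAc k j)
    · exact continuousOn_finset_sum _ fun k _ =>
        (continuousOn_finset_sum _ fun l _ => (hYcont i l).mul (hHppc l k)).mul (hYcont k j)
  have hψcont : ∀ β : Fin N → ℝ, ContinuousOn (fun r => β ⬝ᵥ (G r).mulVec β) (Set.Icc t T) := by
    intro β
    simp only [dotProduct, Matrix.mulVec]
    exact continuousOn_finset_sum _ fun i _ => continuousOn_const.mul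
      (continuousOn_finset_sum _ fun j _ => (hGcont i j).mul continuousOn_const)
  have hxxcont : ∀ β : Fin N → ℝ, ContinuousOn (fun r => β ⬝ᵥ (Hxx r).mulVec β) (Set.Icc t T) := by
    intro β
    simp only [dotProduct, Matrix.mulVec]
    exact continuousOn_finset_sum _ fun i _ => continuousOn_const.mul
      (continuousOn_finset_sum _ fun j _ => (hHxxc i j).mul continuousOn_const)
  -- integral equation for the quadratic form
  have hφeq : ∀ u ∈ Set.Icc t T, ∀ β : Fin N → ℝ,
      β ⬝ᵥ (Y u).mulVec β = β ⬝ᵥ UT.mulVec β + ∫ r in u..T, β ⬝ᵥ (G r).mulVec β := by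
    intro u hu β
    have hint : ∀ i j : Fin N, IntervalIntegrable
        (fun r => β i * (G r i j * β j)) MeasureTheory.volume u T := by
      intro i j
      refine ContinuousOn.intervalIntegrable ?_
      rw [Set.uIcc_of_le hu.2]
      exact (continuousOn_const.mul ((hGcont i j).mul continuousOn_const)).mono
        (Set.Icc_subset_Icc hu.1 le_rfl)
    have e1 : ∀ i j : Fin N, β i * ((∫ r in u..T, G r i j) * β j)
        = ∫ r in u..T, β i * (G r i j * β j) := by
      intro i j
      rw [← intervalIntegral.integral_mul_const, ← intervalIntegral.integral_const_mul]
    calc β ⬝ᵥ (Y u).mulVec β = ∑ i, ∑ j, β i * (Y u i j * β j) := by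
          simp [dotProduct, Matrix.mulVec, Finset.mul_sum]
      _ = ∑ i, ∑ j, (β i * (UT i j * β j) + β i * ((∫ r in u..T, G r i j) * β j)) := by
          refine Finset.sum_congr rfl fun i _ => Finset.sum_congr rfl fun j _ => ?_
          rw [heq u hu i j]; ring
      _ = (∑ i, ∑ j, β i * (UT i j * β j))
          + ∑ i, ∑ j, β i * ((∫ r in u..T, G r i j) * β j) := by
          rw [← Finset.sum_add_distrib]
          exact Finset.sum_congr rfl fun i _ => by rw [← Finset.sum_add_distrib]
      _ = β ⬝ᵥ UT.mulVec β + ∫ r in u..T, β ⬝ᵥ (G r).mulVec β := by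
          congr 1
          · simp [dotProduct, Matrix.mulVec, Finset.mul_sum]
          · have e2 : ∀ i : Fin N, (∑ j, ∫ r in u..T, β i * (G r i j * β j))
                = ∫ r in u..T, ∑ j, β i * (G r i j * β j) :=
              fun i => (intervalIntegral.integral_finset_sum (fun j _ => hint i j)).symm
            simp_rw [e1]
            rw [Finset.sum_congr rfl fun i _ => e2 i,
              ← intervalIntegral.integral_finset_sum (μ := MeasureTheory.volume)
                (f := fun i r => ∑ j, β i * (G r i j * β j))
                (fun i _ => ContinuousOn.intervalIntegrable (by
                  rw [Set.uIcc_of_le hu.2]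
                  exact (continuousOn_finset_sum _ fun j _ =>
                      continuousOn_const.mul ((hGcont i j).mul continuousOn_const)).mono
                    (Set.Icc_subset_Icc hu.1 le_rfl)))]
            refine intervalIntegral.integral_congr fun r _ => ?_
            simp [dotProduct, Matrix.mulVec, Finset.mul_sum]
  -- pointwise integrand bound
  have hψle : ∀ r ∈ Set.Icc t T, ∀ β : Fin N → ℝ, (∑ i, β i ^ 2) = 1 →
      β ⬝ᵥ (G r).mulVec β ≤ β ⬝ᵥ (Hxx r).mulVec β + 2 * c * g r := by
    intro r hr β hβ
    obtain ⟨hYs, hAs, hHxxs, hHpps⟩ := hsym r hr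
    set a : Fin N → ℝ := (A r).mulVec β with hadef
    have ha2 : (∑ i, a i ^ 2) ≤ c^2 := by
      have h1 := hAnorm r hr β
      rw [hβ, Real.sqrt_one, mul_one] at h1
      have h2 : 0 ≤ ∑ i, a i ^ 2 := Finset.sum_nonneg fun i _ => sq_nonneg _
      nlinarith [Real.sq_sqrt h2, Real.sqrt_nonneg (∑ i, a i ^ 2)]
    have hcross : a ⬝ᵥ (Y r).mulVec β ≤ c * g r := by
      have hCS := psd_CS' (hY r hr) a β
      have h1 : a ⬝ᵥ (Y r).mulVec a ≤ g r * c^2 := by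
        calc a ⬝ᵥ (Y r).mulVec a ≤ g r * (∑ i, a i ^ 2) := hQscale r hr a
          _ ≤ g r * c^2 := mul_le_mul_of_nonneg_left ha2 (hg0 r hr)
      have h2 : β ⬝ᵥ (Y r).mulVec β ≤ g r := hQle r hr β hβ
      have h4 : 0 ≤ β ⬝ᵥ (Y r).mulVec β := by
        have := (hY r hr).dotProduct_mulVec_nonneg β; rwa [star_trivial] at this
      have h5 : 0 ≤ a ⬝ᵥ (Y r).mulVec a := by
        have := (hY r hr).dotProduct_mulVec_nonneg a; rwa [star_trivial] at this
      have h3 : (a ⬝ᵥ (Y r).mulVec β)^2 ≤ (c * g r)^2 := by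
        nlinarith [hg0 r hr]
      calc a ⬝ᵥ (Y r).mulVec β ≤ |a ⬝ᵥ (Y r).mulVec β| := le_abs_self _
        _ = Real.sqrt ((a ⬝ᵥ (Y r).mulVec β)^2) := (Real.sqrt_sq_eq_abs _).symm
        _ ≤ Real.sqrt ((c * g r)^2) := Real.sqrt_le_sqrt h3
        _ = c * g r := Real.sqrt_sq (mul_nonneg hc (hg0 r hr))
    have eAY : β ⬝ᵥ ((A r * Y r).mulVec β) = a ⬝ᵥ (Y r).mulVec β := by
      rw [← Matrix.mulVec_mulVec, dot_symm' hAs β ((Y r).mulVec β), hadef,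
        dotProduct_comm]
    have eYA : β ⬝ᵥ ((Y r * A r).mulVec β) = a ⬝ᵥ (Y r).mulVec β := by
      rw [← Matrix.mulVec_mulVec, dot_symm' hYs β ((A r).mulVec β), hadef]
    have eHpp : β ⬝ᵥ ((Y r * Hpp r * Y r).mulVec β) ≤ 0 := by
      set w : Fin N → ℝ := (Y r).mulVec β with hwdef
      have e : β ⬝ᵥ ((Y r * Hpp r * Y r).mulVec β) = w ⬝ᵥ (Hpp r).mulVec w := by
        rw [← Matrix.mulVec_mulVec, ← Matrix.mulVec_mulVec,
          dot_symm' hYs β ((Hpp r).mulVec w), dotProduct_comm, hwdef]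
      rw [e]
      have h6 := (hHpp r hr).dotProduct_mulVec_nonneg w
      rw [star_trivial] at h6
      rw [Matrix.neg_mulVec, dotProduct_neg] at h6
      linarith
    have edec : β ⬝ᵥ (G r).mulVec β
        = β ⬝ᵥ (Hxx r).mulVec β + β ⬝ᵥ ((A r * Y r).mulVec β)
          + β ⬝ᵥ ((Y r * A r).mulVec β) + β ⬝ᵥ ((Y r * Hpp r * Y r).mulVec β) := by
      simp only [hGdef, Matrix.add_mulVec, dotProduct_add]
    rw [edec, eAY, eYA]
    linarith
  -- the elementary integral
  have hintpow : ∀ u : ℝ, ∀ k : ℕ, (∫ r in u..T, (T - r)^k) = (T-u)^(k+1) / (k+1) := by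
    intro u k
    rw [intervalIntegral.integral_comp_sub_left (fun x => x^k) T]
    simp [integral_pow]
  -- Gronwall iteration
  have key : ∀ n : ℕ, ∀ u ∈ Set.Icc t T,
      g u ≤ (c/N) * (∑ k ∈ Finset.range n, (2*c*(T-u))^k / (k.factorial : ℝ))
        + M * (2*c*(T-u))^n / (n.factorial : ℝ) := by
    intro n
    induction n with
    | zero =>
      intro u hu
      simpa using hgM' u hu
    | succ n ih =>
      intro u hu
      refine csSup_le (hSne u) ?_
      rintro x ⟨β, hβ, rfl⟩
      simp only [Set.mem_setOf_eq] at hβ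
      have huT : u ≤ T := hu.2
      have hsub : Set.Icc u T ⊆ Set.Icc t T := Set.Icc_subset_Icc hu.1 le_rfl
      show β ⬝ᵥ (Y u).mulVec β ≤ _
      rw [hφeq u hu β]
      set E : ℝ → ℝ := fun r => (c/N) * (∑ k ∈ Finset.range n, (2*c*(T-r))^k / (k.factorial : ℝ))
        + M * (2*c*(T-r))^n / (n.factorial : ℝ) with hEdef
      have hEcont : Continuous E := by
        rw [hEdef]
        refine Continuous.add (continuous_const.mul ?_) ((continuous_const.mul ?_).div_const _)
        · exact continuous_finset_sum _ fun k _ =>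
            (((continuous_const.mul (continuous_const.sub continuous_id)).pow k).div_const _)
        · exact (continuous_const.mul (continuous_const.sub continuous_id)).pow n
      have int_ψ : IntervalIntegrable (fun r => β ⬝ᵥ (G r).mulVec β) MeasureTheory.volume u T :=
        ContinuousOn.intervalIntegrable (by rw [Set.uIcc_of_le huT]; exact (hψcont β).mono hsub)
      have int_h : IntervalIntegrable (fun r => β ⬝ᵥ (Hxx r).mulVec β) MeasureTheory.volume u T :=
        ContinuousOn.intervalIntegrable (by rw [Set.uIcc_of_le huT]; exact (hxxcont β).mono hsub)
      have int_h' : IntervalIntegrable (fun r => β ⬝ᵥ (Hxx r).mulVec β) MeasureTheory.volume t u :=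
        ContinuousOn.intervalIntegrable (by
          rw [Set.uIcc_of_le hu.1]
          exact (hxxcont β).mono (Set.Icc_subset_Icc le_rfl huT))
      have int_E : IntervalIntegrable (fun r => 2*c*E r) MeasureTheory.volume u T :=
        (Continuous.intervalIntegrable (continuous_const.mul hEcont) u T)
      have h1 : (∫ r in u..T, β ⬝ᵥ (G r).mulVec β)
          ≤ ∫ r in u..T, (β ⬝ᵥ (Hxx r).mulVec β + 2*c*E r) := by
        refine intervalIntegral.integral_mono_on huT int_ψ (int_h.add int_E) ?_
        intro r hr
        have hrT := hsub hr
        have hb1 := hψle r hrT β hβ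
        have hb2 : 2*c*g r ≤ 2*c*E r := by
          simp only [hEdef]
          exact mul_le_mul_of_nonneg_left (ih r hrT) (by positivity : (0:ℝ) ≤ 2*c)
        linarith
      have h2 : (∫ r in u..T, (β ⬝ᵥ (Hxx r).mulVec β + 2*c*E r))
          = (∫ r in u..T, β ⬝ᵥ (Hxx r).mulVec β) + ∫ r in u..T, 2*c*E r :=
        intervalIntegral.integral_add int_h int_E
      have h3 : (∫ r in u..T, β ⬝ᵥ (Hxx r).mulVec β)
          ≤ ∫ r in t..T, β ⬝ᵥ (Hxx r).mulVec β := by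
        have hsplit := intervalIntegral.integral_add_adjacent_intervals int_h' int_h
        have hpos : 0 ≤ ∫ r in t..u, β ⬝ᵥ (Hxx r).mulVec β := by
          refine intervalIntegral.integral_nonneg hu.1 fun r hr => ?_
          have := (hHxx r ⟨hr.1, le_trans hr.2 huT⟩).dotProduct_mulVec_nonneg β
          rwa [star_trivial] at this
        linarith
      have h4 := hsmall β hβ
      have h5 : (∫ r in u..T, 2*c*E r)
          = (c/N) * (∑ k ∈ Finset.range n, (2*c*(T-u))^(k+1) / ((k+1).factorial : ℝ))
            + M * (2*c*(T-u))^(n+1) / ((n+1).factorial : ℝ) := by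
        have e : ∀ r : ℝ, 2*c*E r
            = (∑ k ∈ Finset.range n, ((c/N) * (2*c)^(k+1) / (k.factorial : ℝ)) * (T-r)^k)
              + (M * (2*c)^(n+1) / (n.factorial : ℝ)) * (T-r)^n := by
          intro r
          rw [hEdef]
          simp only [mul_add, Finset.mul_sum, mul_pow]
          congr 1
          · exact Finset.sum_congr rfl fun k _ => by ring
          · ring
        rw [intervalIntegral.integral_congr (fun r _ => e r)]
        have intsum : ∀ k : ℕ, IntervalIntegrable
            (fun r : ℝ => ((c/N) * (2*c)^(k+1) / (k.factorial : ℝ)) * (T-r)^k)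
            MeasureTheory.volume u T :=
          fun k => Continuous.intervalIntegrable (by fun_prop) u T
        have intpol : IntervalIntegrable
            (fun r : ℝ => (M * (2*c)^(n+1) / (n.factorial : ℝ)) * (T-r)^n)
            MeasureTheory.volume u T := Continuous.intervalIntegrable (by fun_prop) u T
        have intsumall : IntervalIntegrable
            (fun r : ℝ => ∑ k ∈ Finset.range n,
              ((c/N) * (2*c)^(k+1) / (k.factorial : ℝ)) * (T-r)^k)
            MeasureTheory.volume u T :=
          Continuous.intervalIntegrable
            (continuous_finset_sum _ fun k _ => by fun_prop) u T
        rw [intervalIntegral.integral_add intsumall intpol]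
        rw [intervalIntegral.integral_finset_sum (fun k _ => intsum k)]
        simp_rw [intervalIntegral.integral_const_mul, hintpow]
        congr 1
        · rw [Finset.mul_sum]
          refine Finset.sum_congr rfl fun k _ => ?_
          have hk1 : ((k.factorial : ℝ)) ≠ 0 := Nat.cast_ne_zero.mpr k.factorial_ne_zero
          have hk2 : ((k:ℝ) + 1) ≠ 0 := by positivity
          rw [Nat.factorial_succ]
          push_cast
          simp only [mul_pow]
          field_simp
        · have hn1 : ((n.factorial : ℝ)) ≠ 0 := Nat.cast_ne_zero.mpr n.factorial_ne_zero
          have hn2 : ((n:ℝ) + 1) ≠ 0 := by positivity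
          rw [Nat.factorial_succ]
          push_cast
          simp only [mul_pow]
          field_simp
      have goalE : (c/N)
            + ((c/N) * (∑ k ∈ Finset.range n, (2*c*(T-u))^(k+1) / ((k+1).factorial : ℝ))
              + M * (2*c*(T-u))^(n+1) / ((n+1).factorial : ℝ))
          = (c/N) * (∑ k ∈ Finset.range (n+1), (2*c*(T-u))^k / (k.factorial : ℝ))
            + M * (2*c*(T-u))^(n+1) / ((n+1).factorial : ℝ) := by
        rw [Finset.sum_range_succ']
        simp [Nat.factorial]
        ring
      linarith
  -- conclusion
  intro s hs α hα
  have hTs : 0 ≤ 2*c*(T - s) := mul_nonneg (by linarith) (by linarith [hs.2])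
  have hcN : (0:ℝ) ≤ c/N := div_nonneg hc (Nat.cast_nonneg N)
  have hseq : ∀ n : ℕ, α ⬝ᵥ (Y s).mulVec α
      ≤ (c/N) * Real.exp (2*c*(T-s)) + M * (2*c*(T-s))^n / (n.factorial : ℝ) := by
    intro n
    refine (hQle s hs α hα).trans ((key n s hs).trans ?_)
    have h7 := Real.sum_le_exp_of_nonneg hTs n
    have h8 := mul_le_mul_of_nonneg_left h7 hcN
    linarith
  have hlim : Filter.Tendsto
      (fun n : ℕ => (c/N) * Real.exp (2*c*(T-s)) + M * (2*c*(T-s))^n / (n.factorial : ℝ))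
      Filter.atTop (nhds ((c/N) * Real.exp (2*c*(T-s)) + M * 0)) := by
    refine Filter.Tendsto.const_add _ ?_
    have h := FloorSemiring.tendsto_pow_div_factorial_atTop (K := ℝ) (2*c*(T-s))
    have h9 := h.const_mul M
    simpa [mul_div_assoc] using h9
  have hfinal : α ⬝ᵥ (Y s).mulVec α ≤ (c/N) * Real.exp (2*c*(T-s)) := by
    have h10 := ge_of_tendsto' hlim hseq
    simpa using h10
  refine hfinal.trans ?_
  have hexp : Real.exp (2*c*(T-s)) ≤ Real.exp (2*c*(T-t)) :=
    Real.exp_le_exp.2 (by nlinarith [hs.1])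
  exact mul_le_mul_of_nonneg_left hexp hcN
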